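/- For every generalized composition α̃, the leading monomial of G_α̃ with respect to the order ≤_lex is X^α̃ = x₁^{α̃₁}x₂^{α̃₂}⋯, with leading coefficient 1. -/

import Mathlib

/-- Descent set of a composition (list of positive parts): partial sums. -/
def descents (l : List ℕ) : Finset ℕ :=
  (Finset.Ioo 0 l.length).image (fun k => (l.take k).sum)

/-- The fundamental quasi-symmetric function of degree `d` with descent set `D`
(variable `xᵢ` is `X (i-1)`). -/
noncomputable def Fqs (d : ℕ) (D : Finset ℕ) : MvPowerSeries ℕ ℚ :=
  fun e => (Nat.card {j : Fin d → ℕ // Monotone j ∧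
    (∀ a b : Fin d, (a : ℕ) + 1 = (b : ℕ) → (a : ℕ) + 1 ∈ D → j a < j b) ∧
    ∀ s : ℕ, e s = (Finset.univ.filter fun i => j i = s).card} : ℚ)

/-- Strip the trailing zeros of a generalized composition (finite list of parts). -/
def strip (l : List ℕ) : List ℕ := (l.reverse.dropWhile (· == 0)).reverse

/-- Fuel-driven version of the recursive definition of `G`.  After stripping trailing
zeros: if the result `ν` is a standard composition, `G = F_ν`; otherwise write
`ν = γ ++ [0] ++ τ` where `τ = a :: β` is the maximal zero-free (standard) suffix, and
`G_{γ·0·a·β} = G_{γ·a·β} - x_{ℓ(γ)+1} · G_{γ·(a-1)·β}` (note `x_{k}` is `X (k-1)`).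
The fuel (an upper bound for the stripped length, which strictly decreases) makes the
recursion structural. -/
noncomputable def Gaux : ℕ → List ℕ → MvPowerSeries ℕ ℚ
  | 0, l => Fqs (strip l).sum (descents (strip l))
  | (fuel + 1), l =>
      let l' := strip l
      if 0 ∈ l' then
        let r := l'.reverse
        let τ := (r.takeWhile (· != 0)).reverse
        let γ := ((r.dropWhile (· != 0)).tail).reverse
        Gaux fuel (γ ++ τ) -
          MvPowerSeries.X γ.length * Gaux fuel (γ ++ (τ.headI - 1) :: τ.tail)
      else Fqs l'.sum (descents l')

/-- The function `G_{α̃}` of a generalized composition `α̃` (finite list of parts,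
extended by zeros), defined recursively from fundamental quasi-symmetric functions:
`G_{0,0,…} = 1`; `G_{ν·0·0⋯} = F_ν` for `ν` standard; and
`G_{γ̃·0·a·β·0⋯} = G_{γ̃·a·β·0⋯} - x_{ℓ(γ̃)+1}·G_{γ̃·(a-1)·β·0⋯}` for `a > 0`, `β`
standard. -/
noncomputable def G (l : List ℕ) : MvPowerSeries ℕ ℚ := Gaux (strip l).length l

/-- Total degree of an exponent sequence `α : ℕ →₀ ℕ`. -/
def degOf (α : ℕ →₀ ℕ) : ℕ := ∑ i ∈ α.support, α i

/-- The monomial order `≤_lex`: smaller degree is larger, and within a degree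
lexicographically larger is larger. -/
def lexLE (α β : ℕ →₀ ℕ) : Prop :=
  degOf β < degOf α ∨
    (degOf α = degOf β ∧ (α = β ∨ ∃ i, α i < β i ∧ ∀ j, j < i → α j = β j))

/-- The exponent sequence of the monomial `X^{α̃} = x₁^{α̃₁}x₂^{α̃₂}⋯` attached to a
generalized composition given as a list. -/
noncomputable def expOf (l : List ℕ) : ℕ →₀ ℕ :=
  Finsupp.onFinset (Finset.range l.length) (fun i => l.getD i 0)
    (fun i hi => Finset.mem_range.mpr (not_le.mp fun h => hi (List.getD_eq_default _ _ h)))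


def psumF (e : ℕ →₀ ℕ) (v : ℕ) : ℕ := ∑ s ∈ Finset.range v, e s

def inPS (e : ℕ →₀ ℕ) (p : ℕ) : Prop := ∃ v, psumF e v = p

lemma psumF_zero (e : ℕ →₀ ℕ) : psumF e 0 = 0 := rfl

lemma psumF_succ (e : ℕ →₀ ℕ) (v : ℕ) : psumF e (v+1) = psumF e v + e v :=
  Finset.sum_range_succ _ _

lemma psumF_mono (e : ℕ →₀ ℕ) : Monotone (psumF e) := fun _ _ h =>
  Finset.sum_le_sum_of_subset (Finset.range_subset_range.2 h)

lemma psumF_eq_degOf (e : ℕ →₀ ℕ) {N : ℕ} (h : ∀ s ∈ e.support, s < N) :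
    psumF e N = degOf e := by
  rw [degOf]
  refine (Finset.sum_subset (fun s hs => Finset.mem_range.2 (h s hs)) ?_).symm
  intro s _ hs; exact Finsupp.notMem_support_iff.1 hs

lemma exists_bound (e : ℕ →₀ ℕ) : ∃ N, ∀ M, N ≤ M → psumF e M = degOf e := by
  refine ⟨(e.support.sup id)+1, fun M hM => psumF_eq_degOf e ?_⟩
  intro s hs
  have : s ≤ e.support.sup id := Finset.le_sup (f := id) hs
  omega

lemma psumF_le_degOf (e : ℕ →₀ ℕ) (v : ℕ) : psumF e v ≤ degOf e := by
  obtain ⟨N, hN⟩ := exists_bound e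
  calc psumF e v ≤ psumF e (max v N) := psumF_mono e (le_max_left _ _)
  _ = degOf e := hN _ (le_max_right _ _)

lemma card_filter_val_lt {d A : ℕ} (hA : A ≤ d) :
    (Finset.univ.filter fun q : Fin d => (q : ℕ) < A).card = A := by
  have : (Finset.univ.filter fun q : Fin d => (q : ℕ) < A)
      = (Finset.range A).attachFin (fun m hm => lt_of_lt_of_le (Finset.mem_range.1 hm) hA) := by
    ext q
    simp [Finset.mem_attachFin]
  rw [this, Finset.card_attachFin, Finset.card_range]

/-- key: for a monotone map with fiber cardinalities `e`, membership below `v`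
is governed by partial sums. -/
lemma fiber_card {d : ℕ} {e : ℕ →₀ ℕ} {j : Fin d → ℕ} (hm : Monotone j)
    (hf : ∀ s : ℕ, e s = (Finset.univ.filter fun i => j i = s).card) (v : ℕ) :
    ∀ q : Fin d, ((j q : ℕ) < v ↔ (q : ℕ) < psumF e v) := by
  have hcard : psumF e v = (Finset.univ.filter (fun q : Fin d => j q < v)).card := by
    rw [psumF, Finset.card_eq_sum_card_fiberwise (f := j) (t := Finset.range v)
      (fun x hx => Finset.mem_range.2 (Finset.mem_filter.1 hx).2)]
    refine Finset.sum_congr rfl (fun s hs => ?_)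
    rw [hf s]
    congr 1
    ext q
    have := Finset.mem_range.1 hs
    simp only [Finset.mem_filter, Finset.mem_univ, true_and]
    constructor
    · intro h; exact ⟨by omega, h⟩
    · intro h; exact h.2
  intro q
  constructor
  · intro hq
    have hsub : Finset.Iic q ⊆ Finset.univ.filter (fun q' : Fin d => j q' < v) := by
      intro q' hq'
      simp only [Finset.mem_filter, Finset.mem_univ, true_and]
      exact lt_of_le_of_lt (hm (Finset.mem_Iic.1 hq')) hq
    have := Finset.card_le_card hsub
    rw [Fin.card_Iic] at this
    omega
  · intro hq
    by_contra hv
    have hsub : Finset.univ.filter (fun q' : Fin d => j q' < v) ⊆ Finset.Iio q := by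
      intro q' hq'
      simp only [Finset.mem_filter, Finset.mem_univ, true_and] at hq'
      simp only [Finset.mem_Iio]
      by_contra hqq
      exact hv (lt_of_le_of_lt (hm (not_lt.1 hqq)) hq')
    have := Finset.card_le_card hsub
    rw [Fin.card_Iio] at this
    omega

def FCond (d : ℕ) (D : Finset ℕ) (e : ℕ →₀ ℕ) : Prop :=
  degOf e = d ∧ ∀ p ∈ D, 0 < p → p < d → inPS e p

open Classical in
lemma coeff_Fqs (d : ℕ) (D : Finset ℕ) (e : ℕ →₀ ℕ) :
    MvPowerSeries.coeff e (Fqs d D) = if FCond d D e then 1 else 0 := by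
  have h0 : MvPowerSeries.coeff e (Fqs d D) = (Nat.card {j : Fin d → ℕ // Monotone j ∧
      (∀ a b : Fin d, (a : ℕ) + 1 = (b : ℕ) → (a : ℕ) + 1 ∈ D → j a < j b) ∧
      ∀ s : ℕ, e s = (Finset.univ.filter fun i => j i = s).card} : ℚ) := rfl
  rw [h0]
  -- membership implies FCond
  have hmem : ∀ (j : Fin d → ℕ), Monotone j →
      (∀ a b : Fin d, (a : ℕ) + 1 = (b : ℕ) → (a : ℕ) + 1 ∈ D → j a < j b) →
      (∀ s : ℕ, e s = (Finset.univ.filter fun i => j i = s).card) → FCond d D e := by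
    intro j hm hs hf
    have hdeg : degOf e = d := by
      have hcd : (Finset.univ : Finset (Fin d)).card
          = ∑ b ∈ e.support, (Finset.univ.filter fun i => j i = b).card := by
        refine Finset.card_eq_sum_card_fiberwise (fun x _ => ?_)
        rw [Finset.mem_coe, Finsupp.mem_support_iff, hf (j x)]
        have : x ∈ Finset.univ.filter fun i => j i = j x := by simp
        have := Finset.card_pos.2 ⟨x, this⟩
        omega
      have : (Finset.univ : Finset (Fin d)).card = d := by simp
      rw [this] at hcd
      rw [degOf]
      rw [hcd]
      exact (Finset.sum_congr rfl fun b hb => hf b)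
    refine ⟨hdeg, fun p hp hp0 hpd => ?_⟩
    have ha : p - 1 < d := by omega
    have hb : p < d := hpd
    set a : Fin d := ⟨p-1, ha⟩
    set b : Fin d := ⟨p, hb⟩
    have hab : (a : ℕ) + 1 = (b : ℕ) := by simp [a, b]; omega
    have hD' : (a : ℕ) + 1 ∈ D := by
      have : (a : ℕ) + 1 = p := by simp [a]; omega
      rw [this]; exact hp
    have hstr := hs a b hab hD'
    refine ⟨j b, ?_⟩
    have h1 := (fiber_card hm hf (j b) a).1 hstr
    have h2 := (fiber_card hm hf (j b) b)
    have h4 : ¬ ((b : ℕ) < psumF e (j b)) := fun hc => lt_irrefl _ (h2.2 hc)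
    have e1 : (a : ℕ) = p - 1 := rfl
    have e2 : (b : ℕ) = p := rfl
    rw [e1] at h1
    rw [e2] at h4
    omega
  by_cases hC : FCond d D e
  · rw [if_pos hC]
    obtain ⟨hdeg, hPS⟩ := hC
    -- canonical monotone map
    have Hex : ∀ q : Fin d, ∃ v, (q : ℕ) < psumF e (v+1) := by
      intro q
      obtain ⟨N, hN⟩ := exists_bound e
      exact ⟨N, by rw [hN (N+1) (by omega)]; rw [hdeg]; exact q.isLt⟩
    set j : Fin d → ℕ := fun q => Nat.find (Hex q) with hj
    have jle : ∀ (q : Fin d) (v : ℕ), j q ≤ v ↔ (q : ℕ) < psumF e (v+1) := by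
      intro q v
      simp only [hj]
      constructor
      · intro h
        exact lt_of_lt_of_le (Nat.find_spec (Hex q)) (psumF_mono e (by omega))
      · intro h
        exact Nat.find_le h
    have jlt : ∀ (q : Fin d) (v : ℕ), j q < v ↔ (q : ℕ) < psumF e v := by
      intro q v
      cases v with
      | zero => simp [psumF_zero]
      | succ w => rw [Nat.lt_succ_iff, jle]
    have hm : Monotone j := by
      intro q q' hqq
      have h1 : (q' : ℕ) < psumF e (j q' + 1) := (jle q' (j q')).1 le_rfl
      have : (q : ℕ) < psumF e (j q' + 1) := by
        have : (q : ℕ) ≤ (q' : ℕ) := hqq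
        omega
      exact (jle q (j q')).2 this
    have hf : ∀ s : ℕ, e s = (Finset.univ.filter fun i => j i = s).card := by
      intro s
      have hss : psumF e s ≤ psumF e (s+1) := psumF_mono e (by omega)
      have h1 : (Finset.univ.filter fun i : Fin d => j i = s)
          = (Finset.univ.filter fun i : Fin d => (i : ℕ) < psumF e (s+1)) \
            (Finset.univ.filter fun i : Fin d => (i : ℕ) < psumF e s) := by
        ext q
        simp only [Finset.mem_filter, Finset.mem_univ, true_and, Finset.mem_sdiff]
        rw [← jlt q (s+1), ← jlt q s]
        omega
      rw [h1, Finset.card_sdiff_of_subset (by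
        intro q hq
        simp only [Finset.mem_filter, Finset.mem_univ, true_and] at hq ⊢
        omega)]
      rw [card_filter_val_lt (by rw [← hdeg]; exact psumF_le_degOf e _),
          card_filter_val_lt (by rw [← hdeg]; exact psumF_le_degOf e _)]
      have := psumF_succ e s
      omega
    have hs : ∀ a b : Fin d, (a : ℕ) + 1 = (b : ℕ) → (a : ℕ) + 1 ∈ D → j a < j b := by
      intro a b hab hD'
      have hp0 : 0 < (a : ℕ) + 1 := by omega
      have hpd : (a : ℕ) + 1 < d := by rw [hab]; exact b.isLt
      obtain ⟨v₀, hv₀⟩ := hPS _ hD' hp0 hpd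
      have h1 : j a < v₀ := by rw [jlt, hv₀]; omega
      have h2 : ¬ (j b < v₀) := by rw [jlt, hv₀]; omega
      omega
    rw [Nat.card_eq_one_iff_exists.2 ⟨⟨j, hm, hs, hf⟩, ?_⟩]
    · norm_num
    · rintro ⟨j', hm', hs', hf'⟩
      refine Subtype.ext (funext fun q => ?_)
      show j' q = j q
      have h1 : j' q ≤ j q := by
        have := (jle q (j q)).1 le_rfl
        have := (fiber_card hm' hf' (j q + 1) q).2 this
        omega
      have h2 : j q ≤ j' q := by
        have : (j' q : ℕ) < j' q + 1 := by omega
        have := (fiber_card hm' hf' (j' q + 1) q).1 this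
        have := (jlt q (j' q + 1)).2 this
        omega
      omega
  · rw [if_neg hC]
    have : IsEmpty {j : Fin d → ℕ // Monotone j ∧
        (∀ a b : Fin d, (a : ℕ) + 1 = (b : ℕ) → (a : ℕ) + 1 ∈ D → j a < j b) ∧
        ∀ s : ℕ, e s = (Finset.univ.filter fun i => j i = s).card} := by
      refine ⟨fun y => hC ?_⟩
      obtain ⟨j, hm, hs, hf⟩ := y
      exact hmem j hm hs hf
    rw [Nat.card_of_isEmpty]
    norm_num

/-! ### list machinery -/

lemma takeWhile_all_append {p : ℕ → Bool} {A : List ℕ} (hA : ∀ x ∈ A, p x = true) {c : ℕ}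
    (hc : p c = false) (B : List ℕ) : (A ++ c :: B).takeWhile p = A := by
  induction A with
  | nil => simp [List.takeWhile_cons, hc]
  | cons a A ih =>
      have ha : p a = true := hA a (by simp)
      simp only [List.cons_append, List.takeWhile_cons, ha]
      simp [ih (fun x hx => hA x (by simp [hx]))]

lemma dropWhile_all_append {p : ℕ → Bool} {A : List ℕ} (hA : ∀ x ∈ A, p x = true) {c : ℕ}
    (hc : p c = false) (B : List ℕ) : (A ++ c :: B).dropWhile p = c :: B := by
  induction A with
  | nil => simp [List.dropWhile_cons, hc]
  | cons a A ih =>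
      have ha : p a = true := hA a (by simp)
      simp only [List.cons_append, List.dropWhile_cons, ha]
      simp [ih (fun x hx => hA x (by simp [hx]))]

lemma strip_eq_self_of_last {γ τ : List ℕ} (hτ : τ ≠ []) (hτ0 : ∀ x ∈ τ, x ≠ 0) :
    strip (γ ++ 0 :: τ) = γ ++ 0 :: τ := by
  obtain ⟨a, t, rfl⟩ : ∃ a t, τ = t ++ [a] := by
    refine ⟨τ.getLast hτ, τ.dropLast, (List.dropLast_append_getLast hτ).symm⟩
  rw [strip]
  have : (γ ++ 0 :: (t ++ [a])).reverse = a :: (t.reverse ++ 0 :: γ.reverse) := by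
    simp
  rw [this, List.dropWhile_cons]
  have ha : a ≠ 0 := hτ0 a (by simp)
  simp only [ha, beq_iff_eq, if_neg ha]
  simp

lemma strip_spec (l : List ℕ) : ∃ z, l = strip l ++ z ∧ ∀ x ∈ z, x = 0 := by
  refine ⟨(l.reverse.takeWhile (· == 0)).reverse, ?_, ?_⟩
  · have h : l.reverse.takeWhile (· == 0) ++ l.reverse.dropWhile (· == 0) = l.reverse :=
      List.takeWhile_append_dropWhile
    have := congrArg List.reverse h
    rw [List.reverse_append] at this
    rw [strip]
    conv_lhs => rw [← List.reverse_reverse l, ← this]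
  · intro x hx
    rw [List.mem_reverse] at hx
    have := List.mem_takeWhile_imp hx
    simpa using this

lemma allzero_getD {z : List ℕ} (hz : ∀ x ∈ z, x = 0) (k : ℕ) : z.getD k 0 = 0 := by
  by_cases h : k < z.length
  · rw [List.getD_eq_getElem z 0 h]
    exact hz _ (List.getElem_mem h)
  · exact List.getD_eq_default z 0 (by omega)

lemma strip_getD (l : List ℕ) (i : ℕ) : (strip l).getD i 0 = l.getD i 0 := by
  obtain ⟨z, hl, hz⟩ := strip_spec l
  conv_rhs => rw [hl]
  by_cases h : i < (strip l).length
  · rw [List.getD_append _ _ _ _ h]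
  · rw [List.getD_append_right _ _ _ _ (by omega), List.getD_eq_default _ _ (by omega),
      allzero_getD hz]

lemma strip_sum (l : List ℕ) : (strip l).sum = l.sum := by
  obtain ⟨z, hl, hz⟩ := strip_spec l
  conv_rhs => rw [hl]
  rw [List.sum_append, List.sum_eq_zero hz, add_zero]

lemma dropWhile_idem {p : ℕ → Bool} (l : List ℕ) :
    (l.dropWhile p).dropWhile p = l.dropWhile p := by
  cases h : l.dropWhile p with
  | nil => rfl
  | cons x t =>
      have hx := List.head?_dropWhile_not p l
      rw [h] at hx
      simp only [List.head?_cons] at hx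
      rw [List.dropWhile_cons, hx]
      simp

lemma strip_idem (l : List ℕ) : strip (strip l) = strip l := by
  rw [strip, strip, List.reverse_reverse, dropWhile_idem]

lemma strip_length_le (l : List ℕ) : (strip l).length ≤ l.length := by
  obtain ⟨z, hl, _⟩ := strip_spec l
  conv_rhs => rw [hl]
  simp

lemma strip_decomp (l : List ℕ) (h : 0 ∈ strip l) :
    ∃ γ τ, strip l = γ ++ 0 :: τ ∧ τ ≠ [] ∧ ∀ x ∈ τ, x ≠ 0 := by
  set r := (strip l).reverse with hr
  have hrl : strip l = r.reverse := by rw [hr, List.reverse_reverse]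
  have hne : r ≠ [] := by
    intro hc
    rw [hc] at hrl
    rw [hrl] at h
    simp at h
  -- head of r is nonzero
  obtain ⟨x, t0, hx⟩ := List.exists_cons_of_ne_nil hne
  have hxne : x ≠ 0 := by
    have := List.head?_dropWhile_not (· == 0) l.reverse
    have hrd : r = l.reverse.dropWhile (· == 0) := by
      rw [hr, strip, List.reverse_reverse]
    rw [← hrd, hx] at this
    simpa using this
  -- split r by takeWhile (· != 0)
  have hsplit : r.takeWhile (· != 0) ++ r.dropWhile (· != 0) = r :=
    List.takeWhile_append_dropWhile
  set tw := r.takeWhile (· != 0) with htw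
  set dw := r.dropWhile (· != 0) with hdw
  have htw_ne : tw ≠ [] := by
    rw [htw, hx, List.takeWhile_cons]
    simp [hxne]
  have hdw_ne : dw ≠ [] := by
    intro hc
    have h0r : (0 : ℕ) ∈ r := by rw [hrl] at h; simpa using h
    have : ∀ y ∈ r, (y != 0) = true := by
      rw [← hsplit, hc, List.append_nil]
      intro y hy
      rw [htw] at hy
      exact List.mem_takeWhile_imp (p := fun x => x != 0) hy
    have := this 0 h0r
    simp at this
  obtain ⟨c, t, hc⟩ := List.exists_cons_of_ne_nil hdw_ne
  have hc0 : c = 0 := by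
    have := List.head?_dropWhile_not (· != 0) r
    rw [← hdw, hc] at this
    simpa using this
  refine ⟨t.reverse, tw.reverse, ?_, ?_, ?_⟩
  · rw [hrl, ← hsplit, hc, hc0]
    simp
  · simpa using htw_ne
  · intro y hy
    rw [List.mem_reverse, htw] at hy
    have := List.mem_takeWhile_imp hy
    simpa using this

lemma Gaux_zero (l : List ℕ) : Gaux 0 l = Fqs (strip l).sum (descents (strip l)) := rfl

lemma Gaux_succ_nomem (n : ℕ) (l : List ℕ) (h : 0 ∉ strip l) :
    Gaux (n+1) l = Fqs (strip l).sum (descents (strip l)) := by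
  simp only [Gaux, h, if_false]

lemma Gaux_succ_mem (n : ℕ) (l γ τ : List ℕ) (hs : strip l = γ ++ 0 :: τ)
    (hτ : τ ≠ []) (hτ0 : ∀ x ∈ τ, x ≠ 0) :
    Gaux (n+1) l = Gaux n (γ ++ τ) -
      MvPowerSeries.X γ.length * Gaux n (γ ++ (τ.headI - 1) :: τ.tail) := by
  have hmem : 0 ∈ strip l := by rw [hs]; simp
  have hrev : (strip l).reverse = τ.reverse ++ 0 :: γ.reverse := by rw [hs]; simp
  have htw : ((strip l).reverse.takeWhile (· != 0)).reverse = τ := by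
    rw [hrev, takeWhile_all_append (fun x hx => by
        simpa using hτ0 x (List.mem_reverse.1 hx)) (by simp) _, List.reverse_reverse]
  have hdw : ((((strip l).reverse.dropWhile (· != 0))).tail).reverse = γ := by
    rw [hrev, dropWhile_all_append (fun x hx => by
        simpa using hτ0 x (List.mem_reverse.1 hx)) (by simp) _, List.tail_cons,
      List.reverse_reverse]
  have hlen : (((strip l).reverse.dropWhile (· != 0)).tail).reverse.length = γ.length := by
    rw [hdw]
  simp only [Gaux, hmem, if_true, htw, hdw]

lemma Gaux_strip (n : ℕ) (l : List ℕ) : Gaux n (strip l) = Gaux n l := by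
  cases n with
  | zero => simp only [Gaux, strip_idem]
  | succ n => simp only [Gaux, strip_idem]

lemma Gaux_congr (n : ℕ) : ∀ m l, (strip l).length ≤ n → (strip l).length ≤ m →
    Gaux n l = Gaux m l := by
  induction n with
  | zero =>
      intro m l h0 _
      have hnil : strip l = [] := List.length_eq_zero_iff.1 (by omega)
      have h0m : 0 ∉ strip l := by rw [hnil]; simp
      cases m with
      | zero => rfl
      | succ m => rw [Gaux_succ_nomem m l h0m]; rfl
  | succ n ih =>
      intro m l hn hm
      by_cases h0 : 0 ∈ strip l
      · have hpos : 0 < (strip l).length := List.length_pos_iff.2 (by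
          intro hc; rw [hc] at h0; simp at h0)
        cases m with
        | zero => omega
        | succ m =>
            obtain ⟨γ, τ, hs, hτ, hτ0⟩ := strip_decomp l h0
            have hlength : (strip l).length = γ.length + τ.length + 1 := by
              rw [hs]; simp; omega
            have hτpos : 0 < τ.length := List.length_pos_iff.2 hτ
            have h1 : (strip (γ ++ τ)).length ≤ n := by
              have := strip_length_le (γ ++ τ)
              rw [List.length_append] at this
              omega
            have h1m : (strip (γ ++ τ)).length ≤ m := by
              have := strip_length_le (γ ++ τ)
              rw [List.length_append] at this
              omega
            have h2 : (strip (γ ++ (τ.headI - 1) :: τ.tail)).length ≤ n := by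
              have := strip_length_le (γ ++ (τ.headI - 1) :: τ.tail)
              rw [List.length_append] at this
              simp only [List.length_cons] at this
              have := List.length_tail (l := τ)
              omega
            have h2m : (strip (γ ++ (τ.headI - 1) :: τ.tail)).length ≤ m := by
              have := strip_length_le (γ ++ (τ.headI - 1) :: τ.tail)
              rw [List.length_append] at this
              simp only [List.length_cons] at this
              have := List.length_tail (l := τ)
              omega
            rw [Gaux_succ_mem n l γ τ hs hτ hτ0, Gaux_succ_mem m l γ τ hs hτ hτ0,
              ih m (γ ++ τ) h1 h1m, ih m (γ ++ (τ.headI - 1) :: τ.tail) h2 h2m]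
      · cases m with
        | zero => rw [Gaux_succ_nomem n l h0]; rfl
        | succ m => rw [Gaux_succ_nomem n l h0, Gaux_succ_nomem m l h0]

lemma G_eq_Gaux (n : ℕ) (l : List ℕ) (h : (strip l).length ≤ n) : Gaux n l = G l :=
  Gaux_congr n _ l h le_rfl

lemma G_strip (l : List ℕ) : G (strip l) = G l := by
  rw [G, G, strip_idem, Gaux_strip]

lemma GRec (γ τ : List ℕ) (hτ : τ ≠ []) (hτ0 : ∀ x ∈ τ, x ≠ 0) :
    G (γ ++ 0 :: τ) = G (γ ++ τ) -
      MvPowerSeries.X γ.length * G (γ ++ (τ.headI - 1) :: τ.tail) := by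
  have hss : strip (γ ++ 0 :: τ) = γ ++ 0 :: τ := strip_eq_self_of_last hτ hτ0
  have hτpos : 0 < τ.length := List.length_pos_iff.2 hτ
  have hlen : (strip (γ ++ 0 :: τ)).length = (γ.length + τ.length) + 1 := by
    rw [hss]; simp; omega
  rw [G, hlen, Gaux_succ_mem _ _ γ τ hss hτ hτ0]
  rw [G_eq_Gaux _ (γ ++ τ) (by
    have := strip_length_le (γ ++ τ); rw [List.length_append] at this; omega)]
  rw [G_eq_Gaux _ (γ ++ (τ.headI - 1) :: τ.tail) (by
    have := strip_length_le (γ ++ (τ.headI - 1) :: τ.tail)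
    rw [List.length_append] at this
    simp only [List.length_cons] at this
    have := List.length_tail (l := τ)
    omega)]

/-! ### lsum and getD lemmas -/

def lsum (l : List ℕ) (v : ℕ) : ℕ := ∑ s ∈ Finset.range v, l.getD s 0

def Dcond (l : List ℕ) (e : ℕ →₀ ℕ) : Prop := ∀ k, 0 < k → k < l.length → inPS e (lsum l k)

def ZeroVan (l : List ℕ) (e : ℕ →₀ ℕ) : Prop := ∀ z, z < l.length → l.getD z 0 = 0 → e z = 0

lemma lsum_take (l : List ℕ) (v : ℕ) : lsum l v = (l.take v).sum := by
  induction v with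
  | zero => simp [lsum]
  | succ v ih =>
      rw [lsum, Finset.sum_range_succ, ← lsum, ih]
      by_cases h : v < l.length
      · rw [List.sum_take_succ l v h, List.getD_eq_getElem l 0 h]
      · rw [List.getD_eq_default l 0 (by omega), List.take_of_length_le (by omega),
          List.take_of_length_le (by omega), add_zero]

lemma lsum_eq_sum (l : List ℕ) {v : ℕ} (h : l.length ≤ v) : lsum l v = l.sum := by
  rw [lsum_take, List.take_of_length_le h]

lemma lsum_le_sum (l : List ℕ) (v : ℕ) : lsum l v ≤ l.sum := by
  rw [lsum_take]
  conv_rhs => rw [← List.take_append_drop v l]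
  rw [List.sum_append]
  omega

lemma lsum_append_le {A : List ℕ} (B : List ℕ) {v : ℕ} (h : v ≤ A.length) :
    lsum (A ++ B) v = lsum A v := by
  refine Finset.sum_congr rfl (fun s hs => ?_)
  have := Finset.mem_range.1 hs
  exact List.getD_append _ _ _ _ (by omega)

lemma lsum_append_add (A B : List ℕ) (j : ℕ) :
    lsum (A ++ B) (A.length + j) = A.sum + lsum B j := by
  induction j with
  | zero => rw [add_zero, lsum_append_le B le_rfl, lsum_eq_sum A le_rfl, lsum, Finset.sum_range_zero, add_zero]
  | succ j ih =>
      have h1 : A.length + (j+1) = (A.length + j) + 1 := by omega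
      rw [h1, lsum, Finset.sum_range_succ, ← lsum, ih,
        List.getD_append_right _ _ _ _ (by omega)]
      have h2 : A.length + j - A.length = j := by omega
      rw [h2]
      simp only [lsum]
      rw [Finset.sum_range_succ]
      omega

lemma getD_append_lt {A : List ℕ} (B : List ℕ) {j : ℕ} (h : j < A.length) :
    (A ++ B).getD j 0 = A.getD j 0 := List.getD_append _ _ _ _ h

lemma getD_append_at (A : List ℕ) (c : ℕ) (B : List ℕ) :
    (A ++ c :: B).getD A.length 0 = c := by
  rw [List.getD_append_right _ _ _ _ le_rfl]
  simp

lemma getD_append_gt (A : List ℕ) (c : ℕ) (B : List ℕ) (k : ℕ) :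
    (A ++ c :: B).getD (A.length + 1 + k) 0 = B.getD k 0 := by
  rw [List.getD_append_right _ _ _ _ (by omega)]
  have : A.length + 1 + k - A.length = k + 1 := by omega
  rw [this]
  rfl

/-! ### expOf lemmas -/

lemma expOf_apply (l : List ℕ) (i : ℕ) : expOf l i = l.getD i 0 := rfl

lemma psumF_expOf (l : List ℕ) (v : ℕ) : psumF (expOf l) v = lsum l v := rfl

lemma degOf_expOf (l : List ℕ) : degOf (expOf l) = l.sum := by
  rw [← psumF_eq_degOf (expOf l) (N := l.length) (fun s hs => ?_), psumF_expOf,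
    lsum_eq_sum l le_rfl]
  have := Finsupp.support_onFinset_subset hs
  exact Finset.mem_range.1 this

lemma expOf_strip (l : List ℕ) : expOf (strip l) = expOf l := by
  ext i
  rw [expOf_apply, expOf_apply, strip_getD]

/-! ### coefficient helpers -/

lemma coeff_X_mul' (s : ℕ) (φ : MvPowerSeries ℕ ℚ) (e : ℕ →₀ ℕ) :
    MvPowerSeries.coeff e (MvPowerSeries.X s * φ)
      = if e s = 0 then 0 else MvPowerSeries.coeff (e - Finsupp.single s 1) φ := by
  classical
  rw [MvPowerSeries.X, MvPowerSeries.coeff_monomial_mul]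
  by_cases h : e s = 0
  · rw [if_neg, if_pos h]
    intro hc
    have := hc s
    simp [h] at this
  · rw [if_pos, if_neg h, one_mul]
    intro t
    by_cases ht : t = s
    · subst ht
      simp only [Finsupp.single_eq_same]
      omega
    · simp [Finsupp.single_eq_of_ne' (Ne.symm ht)]

lemma psumF_sub_single_le {e : ℕ →₀ ℕ} {g v : ℕ} (h : v ≤ g) :
    psumF (e - Finsupp.single g 1) v = psumF e v := by
  refine Finset.sum_congr rfl (fun s hs => ?_)
  have hs' := Finset.mem_range.1 hs
  rw [Finsupp.tsub_apply, Finsupp.single_eq_of_ne' (by omega)]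
  rfl

lemma psumF_sub_single_gt {e : ℕ →₀ ℕ} {g : ℕ} (he : 1 ≤ e g) {v : ℕ} (h : g < v) :
    psumF e v = psumF (e - Finsupp.single g 1) v + 1 := by
  have hpt : ∀ s, e s = (e - Finsupp.single g 1 : ℕ →₀ ℕ) s + (if g = s then 1 else 0) := by
    intro s
    rw [Finsupp.tsub_apply]
    by_cases hs : g = s
    · subst hs; rw [Finsupp.single_eq_same, if_pos rfl]; omega
    · rw [Finsupp.single_eq_of_ne' hs, if_neg hs]; omega
  rw [psumF, psumF, Finset.sum_congr rfl (fun s _ => hpt s), Finset.sum_add_distrib,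
    Finset.sum_ite_eq (Finset.range v) g (fun _ => 1), if_pos (Finset.mem_range.2 h)]

lemma degOf_sub_single {e : ℕ →₀ ℕ} {g : ℕ} (h : 1 ≤ e g) :
    degOf e = degOf (e - Finsupp.single g 1) + 1 := by
  obtain ⟨N1, h1⟩ := exists_bound e
  obtain ⟨N2, h2⟩ := exists_bound (e - Finsupp.single g 1)
  set N := max (max N1 N2) (g+1) with hN
  rw [← h1 N (by omega), ← h2 N (by omega)]
  exact psumF_sub_single_gt h (by omega)

lemma G_nomem (l : List ℕ) (h : 0 ∉ strip l) :
    G l = Fqs (strip l).sum (descents (strip l)) := by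
  rw [G]
  cases h' : (strip l).length with
  | zero => rw [Gaux_zero]
  | succ n => rw [Gaux_succ_nomem _ _ h]

lemma strip_last_struct (l : List ℕ) (h : strip l ≠ []) :
    ∃ A a, strip l = A ++ [a] ∧ a ≠ 0 := by
  have hne : (strip l).reverse ≠ [] := by simpa using h
  obtain ⟨x, t0, hx⟩ := List.exists_cons_of_ne_nil hne
  have hxne : x ≠ 0 := by
    have h1 := List.head?_dropWhile_not (· == 0) l.reverse
    have hrd : (strip l).reverse = l.reverse.dropWhile (· == 0) := by
      rw [strip, List.reverse_reverse]
    rw [← hrd, hx] at h1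
    simpa using h1
  refine ⟨t0.reverse, x, ?_, hxne⟩
  have := congrArg List.reverse hx
  rw [List.reverse_reverse] at this
  rw [this]
  simp

lemma lsum_lt_sum_strip (l : List ℕ) {k : ℕ} (hk : k < (strip l).length) :
    lsum (strip l) k < (strip l).sum := by
  have hne : strip l ≠ [] := by
    intro hc; rw [hc] at hk; simp at hk
  obtain ⟨A, a, hA, ha⟩ := strip_last_struct l hne
  have hlen : (strip l).length = A.length + 1 := by rw [hA]; simp
  have h1 : lsum (strip l) k = lsum A k := by rw [hA]; exact lsum_append_le _ (by omega)
  have h2 : (strip l).sum = A.sum + a := by rw [hA]; simp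
  have := lsum_le_sum A k
  omega

open Classical in
lemma coeff_G_nomem (l : List ℕ) (e : ℕ →₀ ℕ) (h : 0 ∉ strip l) :
    MvPowerSeries.coeff e (G l)
      = if degOf e = (strip l).sum ∧ Dcond (strip l) e then 1 else 0 := by
  rw [G_nomem l h, coeff_Fqs]
  refine if_congr ?_ rfl rfl
  rw [FCond]
  constructor
  · rintro ⟨hd, hD⟩
    refine ⟨hd, fun k hk hkl => ?_⟩
    by_cases hz : lsum (strip l) k = 0
    · exact ⟨0, by rw [psumF_zero, hz]⟩
    · refine hD _ ?_ (by omega) (lsum_lt_sum_strip l hkl)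
      rw [descents]
      refine Finset.mem_image.2 ⟨k, Finset.mem_Ioo.2 ⟨by omega, hkl⟩, ?_⟩
      rw [← lsum_take]
  · rintro ⟨hd, hD⟩
    refine ⟨hd, fun p hp hp0 hpd => ?_⟩
    rw [descents] at hp
    obtain ⟨k, hk, hkp⟩ := Finset.mem_image.1 hp
    rw [Finset.mem_Ioo] at hk
    have := hD k hk.1 hk.2
    rw [lsum_take] at this
    rw [← hkp]
    exact this

lemma lsum_cons (c : ℕ) (B : List ℕ) (j : ℕ) : lsum (c :: B) (j+1) = c + lsum B j := by
  rw [lsum, Finset.sum_range_succ']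
  have h1 : ∀ i, (c :: B).getD (i+1) 0 = B.getD i 0 := fun i => rfl
  have h2 : (c :: B).getD 0 0 = c := rfl
  rw [h2]
  rw [Finset.sum_congr rfl (fun i _ => h1 i)]
  rw [← lsum]
  omega

lemma getD_ne_zero_of_all {L : List ℕ} (hL : ∀ x ∈ L, x ≠ 0) {k : ℕ} (hk : k < L.length) :
    L.getD k 0 ≠ 0 := by
  rw [List.getD_eq_getElem _ _ hk]
  exact hL _ (List.getElem_mem hk)

lemma strip_eq_self' {A τ : List ℕ} (hτ : τ ≠ []) (hτ0 : ∀ x ∈ τ, x ≠ 0) :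
    strip (A ++ τ) = A ++ τ := by
  obtain ⟨a, t, rfl⟩ : ∃ a t, τ = t ++ [a] := by
    refine ⟨τ.getLast hτ, τ.dropLast, (List.dropLast_append_getLast hτ).symm⟩
  rw [strip]
  have hrev : (A ++ (t ++ [a])).reverse = a :: (t.reverse ++ A.reverse) := by simp
  rw [hrev, List.dropWhile_cons]
  have ha : a ≠ 0 := hτ0 a (by simp)
  simp only [ha, beq_iff_eq, if_neg ha]
  simp

lemma Dcond_zero_iff (γ : List ℕ) (a : ℕ) (β : List ℕ) (e : ℕ →₀ ℕ) :
    Dcond (γ ++ 0 :: a :: β) e ↔ Dcond (γ ++ a :: β) e := by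
  have hlen1 : (γ ++ 0 :: a :: β).length = γ.length + β.length + 2 := by simp; omega
  have hlen2 : (γ ++ a :: β).length = γ.length + β.length + 1 := by simp; omega
  have hls1 : ∀ k, k ≤ γ.length → lsum (γ ++ 0 :: a :: β) k = lsum γ k :=
    fun k hk => lsum_append_le _ hk
  have hls2 : ∀ k, k ≤ γ.length → lsum (γ ++ a :: β) k = lsum γ k :=
    fun k hk => lsum_append_le _ hk
  have hhi1 : ∀ j, lsum (γ ++ 0 :: a :: β) (γ.length + 1 + j) = γ.sum + lsum (a :: β) j := by
    intro j
    have h' : γ.length + 1 + j = γ.length + (j + 1) := by omega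
    rw [h', lsum_append_add, lsum_cons]
    omega
  have hhi2 : ∀ j, lsum (γ ++ a :: β) (γ.length + j) = γ.sum + lsum (a :: β) j := by
    intro j; rw [lsum_append_add]
  constructor
  · intro hD k hk0 hkl
    rw [hlen2] at hkl
    by_cases hkg : k ≤ γ.length
    · rw [hls2 k hkg, ← hls1 k hkg]
      exact hD k hk0 (by omega)
    · obtain ⟨j, rfl⟩ : ∃ j, k = γ.length + j := ⟨k - γ.length, by omega⟩
      rw [hhi2 j, ← hhi1 j]
      exact hD _ (by omega) (by omega)
  · intro hD k hk0 hkl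
    rw [hlen1] at hkl
    by_cases hkg : k ≤ γ.length
    · rw [hls1 k hkg, ← hls2 k hkg]
      exact hD k hk0 (by omega)
    · obtain ⟨j, rfl⟩ : ∃ j, k = γ.length + 1 + j := ⟨k - γ.length - 1, by omega⟩
      rw [hhi1 j]
      rcases Nat.eq_zero_or_pos j with hj | hj
      · subst hj
        have h00 : lsum (a :: β) 0 = 0 := rfl
        rw [h00, add_zero]
        rcases Nat.eq_zero_or_pos γ.length with hg | hg
        · have hγnil : γ = [] := List.length_eq_zero_iff.1 hg
          subst hγnil
          exact ⟨0, rfl⟩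
        · have := hD γ.length (by omega) (by omega)
          rw [hls2 _ le_rfl, lsum_eq_sum γ le_rfl] at this
          exact this
      · obtain ⟨j', rfl⟩ : ∃ j', j = j' + 1 := ⟨j - 1, by omega⟩
        rw [← hhi2 (j'+1)]
        exact hD _ (by omega) (by omega)

lemma GRec' (γ : List ℕ) (a : ℕ) (β : List ℕ) (h : ∀ x ∈ a :: β, x ≠ 0) :
    G (γ ++ 0 :: a :: β) = G (γ ++ a :: β) -
      MvPowerSeries.X γ.length * G (γ ++ (a-1) :: β) := by
  have := GRec γ (a :: β) (by simp) h
  simpa using this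

open Classical in
lemma Y2 : ∀ n, ∀ l (e : ℕ →₀ ℕ), (strip l).length ≤ n → ZeroVan (strip l) e →
    MvPowerSeries.coeff e (G l)
      = if degOf e = (strip l).sum ∧ Dcond (strip l) e then 1 else 0 := by
  intro n
  induction n with
  | zero =>
      intro l e h _
      refine coeff_G_nomem l e ?_
      have : strip l = [] := List.length_eq_zero_iff.1 (by omega)
      rw [this]; simp
  | succ n ih =>
      intro l e hlen hvan
      by_cases h0 : 0 ∈ strip l
      · obtain ⟨γ, τ, hs, hτ, hτ0⟩ := strip_decomp l h0
        obtain ⟨a, β, rfl⟩ := List.exists_cons_of_ne_nil hτ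
        have hG : G l = G (γ ++ a :: β) -
            MvPowerSeries.X γ.length * G (γ ++ (a-1) :: β) := by
          rw [← G_strip l, hs]; exact GRec' γ a β hτ0
        have hlen0 : (strip l).length = γ.length + β.length + 2 := by rw [hs]; simp; omega
        have heg : e γ.length = 0 := by
          refine hvan γ.length (by omega) ?_
          rw [hs, getD_append_at]
        rw [hG, map_sub, coeff_X_mul', if_pos heg, sub_zero]
        have hsγτ : strip (γ ++ a :: β) = γ ++ a :: β := strip_eq_self' (by simp) hτ0
        have hvan' : ZeroVan (strip (γ ++ a :: β)) e := by
          rw [hsγτ]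
          intro z hz hzd
          rw [List.length_append, List.length_cons] at hz
          by_cases hzγ : z < γ.length
          · refine hvan z (by omega) ?_
            rw [hs, getD_append_lt _ hzγ]
            rw [getD_append_lt _ hzγ] at hzd
            exact hzd
          · exfalso
            have : (γ ++ a :: β).getD z 0 ≠ 0 := by
              rw [List.getD_append_right _ _ _ _ (by omega)]
              refine getD_ne_zero_of_all (fun x hx => hτ0 x hx) ?_
              simp only [List.length_cons]
              omega
            exact this hzd
        rw [ih (γ ++ a :: β) e (by rw [hsγτ]; simp; omega) hvan']
        refine if_congr ?_ rfl rfl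
        rw [hs, hsγτ]
        have hsum : (γ ++ a :: β).sum = (γ ++ 0 :: a :: β).sum := by simp
        constructor
        · rintro ⟨h1, h2⟩
          exact ⟨by rw [h1, hsum], (Dcond_zero_iff γ a β e).2 h2⟩
        · rintro ⟨h1, h2⟩
          exact ⟨by rw [h1, ← hsum], (Dcond_zero_iff γ a β e).1 h2⟩
      · exact coeff_G_nomem l e h0

open Classical in
lemma G_homog : ∀ n, ∀ l (e : ℕ →₀ ℕ), (strip l).length ≤ n →
    MvPowerSeries.coeff e (G l) ≠ 0 → degOf e = (strip l).sum := by
  intro n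
  induction n with
  | zero =>
      intro l e h hne
      have hnil : strip l = [] := List.length_eq_zero_iff.1 (by omega)
      rw [coeff_G_nomem l e (by rw [hnil]; simp)] at hne
      by_cases hc : degOf e = (strip l).sum ∧ Dcond (strip l) e
      · exact hc.1
      · rw [if_neg hc] at hne; exact absurd rfl hne
  | succ n ih =>
      intro l e hlen hne
      by_cases h0 : 0 ∈ strip l
      · obtain ⟨γ, τ, hs, hτ, hτ0⟩ := strip_decomp l h0
        obtain ⟨a, β, rfl⟩ := List.exists_cons_of_ne_nil hτ
        have hG : G l = G (γ ++ a :: β) -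
            MvPowerSeries.X γ.length * G (γ ++ (a-1) :: β) := by
          rw [← G_strip l, hs]; exact GRec' γ a β hτ0
        have hlen0 : (strip l).length = γ.length + β.length + 2 := by rw [hs]; simp; omega
        rw [hG, map_sub, coeff_X_mul'] at hne
        have hsγτ : strip (γ ++ a :: β) = γ ++ a :: β := strip_eq_self' (by simp) hτ0
        have hsum : (strip l).sum = γ.sum + (a + β.sum) := by rw [hs]; simp
        have hlen1 : (strip (γ ++ a :: β)).length ≤ n := by rw [hsγτ]; simp; omega
        have hlen2 : (strip (γ ++ (a-1) :: β)).length ≤ n := by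
          have := strip_length_le (γ ++ (a-1) :: β)
          simp only [List.length_append, List.length_cons] at this ⊢
          omega
        have ha : a ≠ 0 := hτ0 a (by simp)
        by_cases hA : MvPowerSeries.coeff e (G (γ ++ a :: β)) = 0
        · rw [hA, zero_sub, neg_ne_zero] at hne
          by_cases heg : e γ.length = 0
          · rw [if_pos heg] at hne; exact absurd rfl hne
          · rw [if_neg heg] at hne
            have h2 := ih (γ ++ (a-1) :: β) (e - Finsupp.single γ.length 1) hlen2 hne
            have hsum2 : (strip (γ ++ (a-1) :: β)).sum = γ.sum + ((a-1) + β.sum) := by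
              rw [strip_sum]; simp
            have h3 := degOf_sub_single (e := e) (g := γ.length) (by omega)
            omega
        · have h4 := ih (γ ++ a :: β) e hlen1 hA
          rw [hsγτ] at h4
          have h5 : (γ ++ a :: β).sum = γ.sum + (a + β.sum) := by simp
          omega
      · rw [coeff_G_nomem l e h0] at hne
        by_cases hc : degOf e = (strip l).sum ∧ Dcond (strip l) e
        · exact hc.1
        · rw [if_neg hc] at hne; exact absurd rfl hne

lemma sub_single_apply_ne {e : ℕ →₀ ℕ} {g j : ℕ} (h : j ≠ g) :
    (e - Finsupp.single g 1 : ℕ →₀ ℕ) j = e j := by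
  rw [Finsupp.tsub_apply, Finsupp.single_eq_of_ne' (Ne.symm h)]
  rfl

lemma sub_single_apply_same {e : ℕ →₀ ℕ} {g : ℕ} :
    (e - Finsupp.single g 1 : ℕ →₀ ℕ) g = e g - 1 := by
  rw [Finsupp.tsub_apply, Finsupp.single_eq_same]

lemma psumF_prefix {e : ℕ →₀ ℕ} {γ : List ℕ} (h : ∀ j, j < γ.length → e j = γ.getD j 0)
    {v : ℕ} (hv : v ≤ γ.length) : psumF e v = lsum γ v :=
  Finset.sum_congr rfl (fun s hs => h s (by have := Finset.mem_range.1 hs; omega))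

lemma inPS_lsum_prefix {e : ℕ →₀ ℕ} {γ : List ℕ} (h : ∀ j, j < γ.length → e j = γ.getD j 0)
    {k : ℕ} (hk : k ≤ γ.length) : inPS e (lsum γ k) := ⟨k, psumF_prefix h hk⟩

lemma inPS_shift {e : ℕ →₀ ℕ} {γ : List ℕ} (hpre : ∀ j, j < γ.length → e j = γ.getD j 0)
    (heg : 1 ≤ e γ.length) {D : ℕ} (hD : γ.sum + 1 ≤ D) :
    inPS e (D + 1) ↔ inPS (e - Finsupp.single γ.length 1) D := by
  have hlow : ∀ v, v ≤ γ.length → psumF e v ≤ γ.sum := fun v hv => by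
    rw [psumF_prefix hpre hv]; exact lsum_le_sum γ v
  constructor
  · rintro ⟨v, hv⟩
    have hvg : γ.length < v := by
      by_contra h; push_neg at h; have := hlow v h; omega
    exact ⟨v, by have := psumF_sub_single_gt heg hvg; omega⟩
  · rintro ⟨v, hv⟩
    have hvg : γ.length < v := by
      by_contra h; push_neg at h
      have h2 := psumF_sub_single_le (e := e) (g := γ.length) h
      have := hlow v h; omega
    exact ⟨v, by have := psumF_sub_single_gt heg hvg; omega⟩

lemma zerovan_self {γ ρ : List ℕ} {e : ℕ →₀ ℕ} (hρ : ρ ≠ []) (hρ0 : ∀ x ∈ ρ, x ≠ 0)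
    (hpre : ∀ j, j < γ.length → e j = γ.getD j 0) : ZeroVan (strip (γ ++ ρ)) e := by
  rw [strip_eq_self' hρ hρ0]
  intro z hz hzd
  rw [List.length_append] at hz
  by_cases hzγ : z < γ.length
  · rw [getD_append_lt _ hzγ] at hzd
    rw [hpre z hzγ, hzd]
  · exfalso
    have : (γ ++ ρ).getD z 0 ≠ 0 := by
      rw [List.getD_append_right _ _ _ _ (by omega)]
      exact getD_ne_zero_of_all hρ0 (by omega)
    exact this hzd

lemma zerovan_prefix_only {γ : List ℕ} {e : ℕ →₀ ℕ}
    (hpre : ∀ j, j < γ.length → e j = γ.getD j 0) : ZeroVan (strip γ) e := by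
  intro z hz hzd
  have := strip_length_le γ
  rw [strip_getD] at hzd
  rw [hpre z (by omega), hzd]

lemma lsum_strip (l : List ℕ) (v : ℕ) : lsum (strip l) v = lsum l v :=
  Finset.sum_congr rfl (fun s _ => strip_getD l s)

lemma strip_append_zero (A : List ℕ) : strip (A ++ [0]) = strip A := by
  rw [strip, strip]
  have : (A ++ [0]).reverse = 0 :: A.reverse := by simp
  rw [this, List.dropWhile_cons]
  simp

lemma Dcond_dec_iff {γ : List ℕ} {a : ℕ} (ha : 2 ≤ a) (β : List ℕ) {e : ℕ →₀ ℕ}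
    (hpre : ∀ j, j < γ.length → e j = γ.getD j 0) (heg : 1 ≤ e γ.length) :
    Dcond (γ ++ a :: β) e ↔ Dcond (γ ++ (a-1) :: β) (e - Finsupp.single γ.length 1) := by
  set f := (e - Finsupp.single γ.length 1 : ℕ →₀ ℕ) with hf
  have hpre_f : ∀ j, j < γ.length → f j = γ.getD j 0 := fun j hj => by
    rw [hf, sub_single_apply_ne (by omega)]; exact hpre j hj
  have hlen1 : (γ ++ a :: β).length = γ.length + β.length + 1 := by simp; omega
  have hlen2 : (γ ++ (a-1) :: β).length = γ.length + β.length + 1 := by simp; omega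
  have hhi1 : ∀ j, lsum (γ ++ a :: β) (γ.length + (j+1)) = γ.sum + (a + lsum β j) := by
    intro j; rw [lsum_append_add, lsum_cons]
  have hhi2 : ∀ j, lsum (γ ++ (a-1) :: β) (γ.length + (j+1)) = γ.sum + ((a-1) + lsum β j) := by
    intro j; rw [lsum_append_add, lsum_cons]
  constructor
  · intro hD k hk0 hkl
    rw [hlen2] at hkl
    by_cases hkg : k ≤ γ.length
    · rw [lsum_append_le _ hkg]
      exact inPS_lsum_prefix hpre_f hkg
    · obtain ⟨j, rfl⟩ : ∃ j, k = γ.length + (j+1) := ⟨k - γ.length - 1, by omega⟩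
      rw [hhi2 j]
      have h1 := hD (γ.length + (j+1)) (by omega) (by rw [hlen1]; omega)
      rw [hhi1 j] at h1
      have hds : γ.sum + (a + lsum β j) = (γ.sum + ((a-1) + lsum β j)) + 1 := by omega
      rw [hds] at h1
      exact (inPS_shift hpre heg (by omega)).1 h1
  · intro hD k hk0 hkl
    rw [hlen1] at hkl
    by_cases hkg : k ≤ γ.length
    · rw [lsum_append_le _ hkg]
      exact inPS_lsum_prefix hpre hkg
    · obtain ⟨j, rfl⟩ : ∃ j, k = γ.length + (j+1) := ⟨k - γ.length - 1, by omega⟩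
      rw [hhi1 j]
      have h1 := hD (γ.length + (j+1)) (by omega) (by rw [hlen2]; omega)
      rw [hhi2 j] at h1
      have hds : γ.sum + (a + lsum β j) = (γ.sum + ((a-1) + lsum β j)) + 1 := by omega
      rw [hds]
      exact (inPS_shift hpre heg (by omega)).2 h1

lemma Dcond_one_iff {γ : List ℕ} {b : ℕ} {β' : List ℕ} (hb : b ≠ 0) {e : ℕ →₀ ℕ}
    (hpre : ∀ j, j < γ.length → e j = γ.getD j 0) (heg : e γ.length = 1) :
    Dcond (γ ++ 1 :: b :: β') e ↔ Dcond (γ ++ b :: β') (e - Finsupp.single γ.length 1) := by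
  set f := (e - Finsupp.single γ.length 1 : ℕ →₀ ℕ) with hf
  have hpre_f : ∀ j, j < γ.length → f j = γ.getD j 0 := fun j hj => by
    rw [hf, sub_single_apply_ne (by omega)]; exact hpre j hj
  have hlen1 : (γ ++ 1 :: b :: β').length = γ.length + β'.length + 2 := by simp; omega
  have hlen2 : (γ ++ b :: β').length = γ.length + β'.length + 1 := by simp; omega
  have hhi1 : ∀ j, lsum (γ ++ 1 :: b :: β') (γ.length + (j+2))
      = γ.sum + (1 + lsum (b :: β') (j+1)) := by
    intro j
    have h' : (j+2) = (j+1)+1 := rfl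
    rw [lsum_append_add, h', lsum_cons]
  have hhi2 : ∀ j, lsum (γ ++ b :: β') (γ.length + (j+1)) = γ.sum + lsum (b :: β') (j+1) := by
    intro j; rw [lsum_append_add]
  have hconsge : ∀ j, 1 ≤ lsum (b :: β') (j+1) := by
    intro j; rw [lsum_cons]; omega
  constructor
  · intro hD k hk0 hkl
    rw [hlen2] at hkl
    by_cases hkg : k ≤ γ.length
    · rw [lsum_append_le _ hkg]
      exact inPS_lsum_prefix hpre_f hkg
    · obtain ⟨j, rfl⟩ : ∃ j, k = γ.length + (j+1) := ⟨k - γ.length - 1, by omega⟩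
      rw [hhi2 j]
      have h1 := hD (γ.length + (j+2)) (by omega) (by rw [hlen1]; omega)
      rw [hhi1 j] at h1
      have hds : γ.sum + (1 + lsum (b :: β') (j+1)) = (γ.sum + lsum (b :: β') (j+1)) + 1 := by
        omega
      rw [hds] at h1
      exact (inPS_shift hpre (by omega) (by have := hconsge j; omega)).1 h1
  · intro hD k hk0 hkl
    rw [hlen1] at hkl
    by_cases hkg : k ≤ γ.length
    · rw [lsum_append_le _ hkg]
      exact inPS_lsum_prefix hpre hkg
    · by_cases hk1 : k = γ.length + 1
      · subst hk1
        have h' : γ.length + 1 = γ.length + (0+1) := by omega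
        rw [h', lsum_append_add]
        have h1 : lsum (1 :: b :: β') (0+1) = 1 := by
          rw [lsum_cons]; simp [lsum]
        rw [h1]
        refine ⟨γ.length + 1, ?_⟩
        rw [psumF_succ, psumF_prefix hpre le_rfl, lsum_eq_sum γ le_rfl, heg]
      · obtain ⟨j, rfl⟩ : ∃ j, k = γ.length + (j+2) := ⟨k - γ.length - 2, by omega⟩
        rw [hhi1 j]
        have h1 := hD (γ.length + (j+1)) (by omega) (by rw [hlen2]; omega)
        rw [hhi2 j] at h1
        have hds : γ.sum + (1 + lsum (b :: β') (j+1)) = (γ.sum + lsum (b :: β') (j+1)) + 1 := by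
          omega
        rw [hds]
        exact (inPS_shift hpre (by omega) (by have := hconsge j; omega)).2 h1

open Classical in
lemma Y2'' (γ ρ : List ℕ) (e : ℕ →₀ ℕ) (hρ : ρ ≠ []) (hρ0 : ∀ x ∈ ρ, x ≠ 0)
    (hpre : ∀ j, j < γ.length → e j = γ.getD j 0) :
    MvPowerSeries.coeff e (G (γ ++ ρ))
      = if degOf e = (γ ++ ρ).sum ∧ Dcond (γ ++ ρ) e then 1 else 0 := by
  have h := Y2 (strip (γ ++ ρ)).length (γ ++ ρ) e le_rfl (zerovan_self hρ hρ0 hpre)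
  rw [strip_eq_self' hρ hρ0] at h
  exact h

open Classical in
lemma Y2γ (γ : List ℕ) (e : ℕ →₀ ℕ) (hpre : ∀ j, j < γ.length → e j = γ.getD j 0) :
    MvPowerSeries.coeff e (G γ)
      = if degOf e = γ.sum ∧ Dcond (strip γ) e then 1 else 0 := by
  have h := Y2 (strip γ).length γ e le_rfl (zerovan_prefix_only hpre)
  rw [strip_sum] at h
  exact h

open Classical in
lemma RcaseA {γ : List ℕ} {a : ℕ} {β : List ℕ} {e : ℕ →₀ ℕ} (ha2 : 2 ≤ a)
    (hnz : ∀ x ∈ a :: β, x ≠ 0)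
    (hpre : ∀ j, j < γ.length → e j = γ.getD j 0) (heg : 1 ≤ e γ.length) :
    MvPowerSeries.coeff e (G (γ ++ a :: β))
      = MvPowerSeries.coeff (e - Finsupp.single γ.length 1) (G (γ ++ (a-1) :: β)) := by
  have hpre_f : ∀ j, j < γ.length → (e - Finsupp.single γ.length 1 : ℕ →₀ ℕ) j = γ.getD j 0 :=
    fun j hj => by rw [sub_single_apply_ne (by omega)]; exact hpre j hj
  have hnz2 : ∀ x ∈ (a-1) :: β, x ≠ 0 := by
    intro x hx
    rcases List.mem_cons.1 hx with h | h
    · omega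
    · exact hnz x (List.mem_cons_of_mem _ h)
  rw [Y2'' γ (a :: β) e (by simp) hnz hpre,
    Y2'' γ ((a-1) :: β) _ (by simp) hnz2 hpre_f]
  refine if_congr ?_ rfl rfl
  have hdeg := degOf_sub_single (e := e) (g := γ.length) heg
  have hs1 : (γ ++ a :: β).sum = γ.sum + (a + β.sum) := by simp
  have hs2 : (γ ++ (a-1) :: β).sum = γ.sum + ((a-1) + β.sum) := by simp
  constructor
  · rintro ⟨h1, h2⟩
    exact ⟨by omega, (Dcond_dec_iff ha2 β hpre heg).1 h2⟩
  · rintro ⟨h1, h2⟩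
    exact ⟨by omega, (Dcond_dec_iff ha2 β hpre heg).2 h2⟩

open Classical in
lemma RcaseB1 {γ : List ℕ} {e : ℕ →₀ ℕ}
    (hpre : ∀ j, j < γ.length → e j = γ.getD j 0) (heg : 1 ≤ e γ.length) :
    MvPowerSeries.coeff e (G (γ ++ [1]))
      = MvPowerSeries.coeff (e - Finsupp.single γ.length 1) (G (γ ++ [0])) := by
  have hpre_f : ∀ j, j < γ.length → (e - Finsupp.single γ.length 1 : ℕ →₀ ℕ) j = γ.getD j 0 :=
    fun j hj => by rw [sub_single_apply_ne (by omega)]; exact hpre j hj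
  have hG0 : G (γ ++ [0]) = G γ := by
    rw [← G_strip (γ ++ [0]), strip_append_zero, G_strip]
  rw [hG0, Y2'' γ [1] e (by simp) (by simp) hpre, Y2γ γ _ hpre_f]
  refine if_congr ?_ rfl rfl
  have hdeg := degOf_sub_single (e := e) (g := γ.length) heg
  have hs1 : (γ ++ [1]).sum = γ.sum + 1 := by simp
  constructor
  · rintro ⟨h1, _⟩
    refine ⟨by omega, fun k hk0 hkl => ?_⟩
    have hkg : k ≤ γ.length := le_trans (le_of_lt hkl) (strip_length_le γ)
    rw [lsum_strip]
    exact inPS_lsum_prefix hpre_f (by omega)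
  · rintro ⟨h1, _⟩
    refine ⟨by omega, fun k hk0 hkl => ?_⟩
    rw [List.length_append, List.length_cons] at hkl
    have hkg : k ≤ γ.length := by simp at hkl; omega
    rw [lsum_append_le _ hkg]
    exact inPS_lsum_prefix hpre hkg

open Classical in
lemma RLem : ∀ t : ℕ, ∀ (β γ : List ℕ) (a : ℕ) (e : ℕ →₀ ℕ),
    β.length ≤ t → a ≠ 0 → (∀ x ∈ a :: β, x ≠ 0) →
    (∀ j, j < γ.length → e j = γ.getD j 0) → 1 ≤ e γ.length →
    MvPowerSeries.coeff e (G (γ ++ a :: β))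
      = MvPowerSeries.coeff (e - Finsupp.single γ.length 1) (G (γ ++ (a-1) :: β)) := by
  intro t
  induction t with
  | zero =>
      intro β γ a e hβt ha hnz hpre heg
      have hβ : β = [] := List.length_eq_zero_iff.1 (by omega)
      subst hβ
      by_cases ha2 : 2 ≤ a
      · exact RcaseA ha2 hnz hpre heg
      · have ha1 : a = 1 := by omega
        subst ha1
        exact RcaseB1 hpre heg
  | succ t iht =>
      intro β γ a e hβt ha hnz hpre heg
      by_cases ha2 : 2 ≤ a
      · exact RcaseA ha2 hnz hpre heg
      · have ha1 : a = 1 := by omega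
        subst ha1
        cases β with
        | nil => exact RcaseB1 hpre heg
        | cons b β' =>
            set f := (e - Finsupp.single γ.length 1 : ℕ →₀ ℕ) with hf
            have hpre_f : ∀ j, j < γ.length → f j = γ.getD j 0 :=
              fun j hj => by rw [hf, sub_single_apply_ne (by omega)]; exact hpre j hj
            have hb : b ≠ 0 := hnz b (by simp)
            have hnzb : ∀ x ∈ b :: β', x ≠ 0 :=
              fun x hx => hnz x (List.mem_cons_of_mem _ hx)
            have hG : G (γ ++ 0 :: b :: β') = G (γ ++ b :: β') -
                MvPowerSeries.X γ.length * G (γ ++ (b-1) :: β') := GRec' γ b β' hnzb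
            have h10 : (1:ℕ) - 1 = 0 := rfl
            rw [h10, hG, map_sub, coeff_X_mul']
            have hfg : f γ.length = e γ.length - 1 := sub_single_apply_same
            by_cases heg1 : e γ.length = 1
            · rw [if_pos (by rw [hfg, heg1])]
              rw [sub_zero, Y2'' γ (1 :: b :: β') e (by simp) hnz hpre,
                Y2'' γ (b :: β') f (by simp) hnzb hpre_f]
              refine if_congr ?_ rfl rfl
              have hdeg : degOf e = degOf f + 1 := degOf_sub_single heg
              have hs1 : (γ ++ 1 :: b :: β').sum = γ.sum + (1 + (b + β'.sum)) := by simp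
              have hs2 : (γ ++ b :: β').sum = γ.sum + (b + β'.sum) := by simp
              constructor
              · rintro ⟨h1, h2⟩
                exact ⟨by omega, (Dcond_one_iff hb hpre heg1).1 h2⟩
              · rintro ⟨h1, h2⟩
                exact ⟨by omega, (Dcond_one_iff hb hpre heg1).2 h2⟩
            · -- e γ.length ≥ 2 : cascade, RHS difference vanishes by IH, LHS vanishes
              rw [if_neg (by rw [hfg]; omega)]
              have hIH := iht β' γ b f (by simp at hβt; omega) hb hnzb hpre_f
                (by rw [hfg]; omega)
              rw [← hIH, sub_self]
              rw [Y2'' γ (1 :: b :: β') e (by simp) hnz hpre]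
              rw [if_neg]
              rintro ⟨h1, h2⟩
              have hk := h2 (γ.length + 1) (by omega)
                (by simp only [List.length_append, List.length_cons]; omega)
              have hv1 : γ.length + 1 = γ.length + (0+1) := by omega
              rw [hv1, lsum_append_add] at hk
              have hl1 : lsum (1 :: b :: β') (0+1) = 1 := by rw [lsum_cons]; simp [lsum]
              rw [hl1] at hk
              obtain ⟨v, hv⟩ := hk
              by_cases hvg : v ≤ γ.length
              · have := psumF_prefix hpre hvg
                have := lsum_le_sum γ v
                omega
              · have hmono := psumF_mono e (show γ.length + 1 ≤ v by omega)
                have hsucc : psumF e (γ.length + 1) = psumF e γ.length + e γ.length :=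
                  psumF_succ e γ.length
                have hpg : psumF e γ.length = lsum γ γ.length := psumF_prefix hpre le_rfl
                have := lsum_eq_sum γ (le_refl γ.length)
                omega

lemma psumF_prefix' {e : ℕ →₀ ℕ} {l : List ℕ} {i : ℕ}
    (h : ∀ j, j < i → e j = l.getD j 0) {v : ℕ} (hv : v ≤ i) : psumF e v = lsum l v :=
  Finset.sum_congr rfl (fun s hs => h s (by have := Finset.mem_range.1 hs; omega))

lemma lsum_succ (l : List ℕ) (v : ℕ) : lsum l (v+1) = lsum l v + l.getD v 0 :=
  Finset.sum_range_succ _ _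

lemma lsum_mono (l : List ℕ) {v w : ℕ} (h : v ≤ w) : lsum l v ≤ lsum l w :=
  Finset.sum_le_sum_of_subset (Finset.range_subset_range.2 h)

open Classical in
lemma V_viol (l : List ℕ) (e : ℕ →₀ ℕ) (i : ℕ) (hdeg : degOf e = (strip l).sum)
    (hvan : ZeroVan (strip l) e)
    (hpre : ∀ j, j < i → e j = (strip l).getD j 0) (hval : (strip l).getD i 0 < e i) :
    MvPowerSeries.coeff e (G l) = 0 := by
  rw [Y2 (strip l).length l e le_rfl hvan, if_neg]
  rintro ⟨h1, h2⟩
  have hpsum : ∀ v, v ≤ i → psumF e v = lsum (strip l) v := fun v hv => psumF_prefix' hpre hv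
  by_cases hil : i < (strip l).length
  · have hνi : (strip l).getD i 0 ≠ 0 := by
      intro hc
      have := hvan i hil hc
      omega
    have hsucc : lsum (strip l) (i+1) = lsum (strip l) i + (strip l).getD i 0 :=
      lsum_succ _ _
    by_cases hlast : i + 1 < (strip l).length
    · obtain ⟨v, hv⟩ := h2 (i+1) (by omega) hlast
      by_cases hvi : v ≤ i
      · have := hpsum v hvi
        have := lsum_mono (strip l) hvi
        omega
      · have hm := psumF_mono e (show i+1 ≤ v by omega)
        have := psumF_succ e i
        have := hpsum i le_rfl
        omega
    · have h3 : psumF e (i+1) ≤ degOf e := psumF_le_degOf e (i+1)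
      have := psumF_succ e i
      have := hpsum i le_rfl
      have h4 : lsum (strip l) (i+1) = (strip l).sum := lsum_eq_sum _ (by omega)
      omega
  · have hν0 : (strip l).getD i 0 = 0 := List.getD_eq_default _ _ (by omega)
    have h3 : psumF e (i+1) ≤ degOf e := psumF_le_degOf e (i+1)
    have := psumF_succ e i
    have := hpsum i le_rfl
    have h4 : lsum (strip l) i = (strip l).sum := lsum_eq_sum _ (by omega)
    omega

open Classical in
lemma VLem : ∀ n, ∀ l (e : ℕ →₀ ℕ) (i : ℕ), (strip l).length ≤ n →
    degOf e = (strip l).sum →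
    (∀ j, j < i → e j = (strip l).getD j 0) → (strip l).getD i 0 < e i →
    MvPowerSeries.coeff e (G l) = 0 := by
  intro n
  induction n with
  | zero =>
      intro l e i hn hdeg hpre hval
      exact V_viol l e i hdeg (fun z hz _ => absurd hz (by omega)) hpre hval
  | succ n ih =>
      intro l e i hlen hdeg hpre hval
      by_cases h0 : 0 ∈ strip l
      · obtain ⟨γ, τ, hs, hτ, hτ0⟩ := strip_decomp l h0
        obtain ⟨a, β, rfl⟩ := List.exists_cons_of_ne_nil hτ
        have hG : G l = G (γ ++ a :: β) -
            MvPowerSeries.X γ.length * G (γ ++ (a-1) :: β) := by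
          rw [← G_strip l, hs]; exact GRec' γ a β hτ0
        have ha : a ≠ 0 := hτ0 a (by simp)
        have hlen0 : (strip l).length = γ.length + β.length + 2 := by rw [hs]; simp; omega
        have hsγτ : strip (γ ++ a :: β) = γ ++ a :: β := strip_eq_self' (by simp) hτ0
        have hsum0 : (strip l).sum = γ.sum + (a + β.sum) := by rw [hs]; simp
        rcases lt_trichotomy i γ.length with hig | hig | hig
        · -- i < γ.length
          have hA := ih (γ ++ a :: β) e i
            (by rw [hsγτ]; simp only [List.length_append, List.length_cons]; omega)
            (by rw [strip_sum]; simp; omega)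
            (fun j hj => by
              rw [strip_getD, getD_append_lt _ (by omega), hpre j hj, hs,
                getD_append_lt _ (by omega)])
            (by
              rw [strip_getD, getD_append_lt _ hig]
              have := hval
              rw [hs, getD_append_lt _ hig] at this
              exact this)
          rw [hG, map_sub, coeff_X_mul', hA]
          by_cases heg : e γ.length = 0
          · rw [if_pos heg]; simp
          · rw [if_neg heg]
            have hB := ih (γ ++ (a-1) :: β) (e - Finsupp.single γ.length 1) i
              (by
                have := strip_length_le (γ ++ (a-1) :: β)
                simp only [List.length_append, List.length_cons] at this ⊢
                omega)
              (by
                rw [strip_sum]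
                have hd := degOf_sub_single (e := e) (g := γ.length) (by omega)
                have : (γ ++ (a-1) :: β).sum = γ.sum + ((a-1) + β.sum) := by simp
                omega)
              (fun j hj => by
                rw [strip_getD, getD_append_lt _ (by omega),
                  sub_single_apply_ne (by omega), hpre j hj, hs,
                  getD_append_lt _ (by omega)])
              (by
                rw [strip_getD, getD_append_lt _ hig, sub_single_apply_ne (by omega)]
                have := hval
                rw [hs, getD_append_lt _ hig] at this
                exact this)
            rw [hB]; simp
        · -- i = γ.length
          subst hig
          have heg : 1 ≤ e γ.length := by
            have h' : (strip l).getD γ.length 0 = 0 := by rw [hs, getD_append_at]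
            omega
          have hR := RLem β.length β γ a e le_rfl ha hτ0 (fun j hj => by
            rw [hpre j hj, hs, getD_append_lt _ hj]) heg
          rw [hG, map_sub, coeff_X_mul', if_neg (by omega), hR, sub_self]
        · -- i > γ.length
          have hvan : ZeroVan (strip l) e := by
            intro z hz hzd
            by_cases hzi : z < i
            · rw [hpre z hzi]; exact hzd
            · exfalso
              rw [hs] at hzd hz
              simp only [List.length_append, List.length_cons] at hz
              obtain ⟨k, hk⟩ : ∃ k, z = γ.length + 1 + k := ⟨z - γ.length - 1, by omega⟩
              rw [hk, getD_append_gt] at hzd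
              have : (a :: β).getD k 0 ≠ 0 :=
                getD_ne_zero_of_all hτ0 (by simp only [List.length_cons]; omega)
              exact this hzd
          exact V_viol l e i hdeg hvan hpre hval
      · have hvan : ZeroVan (strip l) e := by
          intro z hz hzd
          exact absurd hzd (getD_ne_zero_of_all (fun x hx hc => h0 (hc ▸ hx)) hz)
        exact V_viol l e i hdeg hvan hpre hval


/-- For every generalized composition `α̃`, the leading monomial of `G_{α̃}` with
respect to `≤_lex` is `X^{α̃}`, with leading coefficient `1`: the coefficient of
`X^{α̃}` in `G_{α̃}` is `1`, and every other monomial with nonzero coefficient is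
strictly `≤_lex`-smaller than `X^{α̃}`. -/
theorem G_leadingMonomial (l : List ℕ) :
    MvPowerSeries.coeff (expOf l) (G l) = 1 ∧
    ∀ β : ℕ →₀ ℕ, β ≠ expOf l → MvPowerSeries.coeff β (G l) ≠ 0 →
      lexLE β (expOf l) := by
  classical
  constructor
  · have hvan : ZeroVan (strip l) (expOf l) := by
      intro z hz hzd
      rw [expOf_apply, ← strip_getD]
      exact hzd
    rw [Y2 (strip l).length l (expOf l) le_rfl hvan, if_pos]
    constructor
    · rw [degOf_expOf, strip_sum]
    · intro k hk0 hkl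
      refine ⟨k, ?_⟩
      rw [psumF_expOf, ← lsum_strip]
  · intro b hb hne
    have hdeg : degOf b = (strip l).sum := G_homog (strip l).length l b le_rfl hne
    have hexists : ∃ i, b i ≠ expOf l i := by
      by_contra hc
      push_neg at hc
      exact hb (Finsupp.ext hc)
    set i := Nat.find hexists with hidef
    have hi : b i ≠ expOf l i := Nat.find_spec hexists
    have hmin : ∀ j, j < i → b j = expOf l j := fun j hj =>
      not_not.1 (Nat.find_min hexists hj)
    have hdeg2 : degOf b = degOf (expOf l) := by
      rw [degOf_expOf, hdeg, strip_sum]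
    rcases lt_or_gt_of_ne hi with hlt | hgt
    · exact Or.inr ⟨hdeg2, Or.inr ⟨i, hlt, hmin⟩⟩
    · exfalso
      have h0 := VLem (strip l).length l b i le_rfl hdeg
        (fun j hj => by rw [hmin j hj, expOf_apply, strip_getD])
        (by rw [strip_getD, ← expOf_apply]; exact hgt)
      exact hne h0
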